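/- arXiv:2408.02916 — 5 statements merged into one kernel-verified Lean document; each statement's English description precedes it below -/
import Mathlib

section
/- Let C ⊆ F_2^n be a binary linear code generated by the rows of a triorthogonal matrix G. Then the Schur square of C satisfies C^{⋆2} ⊆ C + C^⊥. -/
open Matrix

/-- A binary matrix is triorthogonal if every Schur (coordinatewise) product of two
distinct rows and of three pairwise distinct rows has even Hamming weight. -/
def Triorthogonal {m n : ℕ} (G : Matrix (Fin m) (Fin n) (ZMod 2)) : Prop :=
  (∀ i j : Fin m, i ≠ j → Even (hammingNorm (G i * G j))) ∧
  (∀ i j k : Fin m, i ≠ j → i ≠ k → j ≠ k → Even (hammingNorm (G i * G j * G k)))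

/-- The Schur square `C^{⋆2}` of a binary linear code. -/
def schurSquare {n : ℕ} (C : Submodule (ZMod 2) (Fin n → ZMod 2)) :
    Submodule (ZMod 2) (Fin n → ZMod 2) :=
  Submodule.span (ZMod 2) {x | ∃ c ∈ C, ∃ c' ∈ C, x = c * c'}

/-- The dual code `C^⊥`. -/
def dualCode {n : ℕ} (C : Submodule (ZMod 2) (Fin n → ZMod 2)) :
    Submodule (ZMod 2) (Fin n → ZMod 2) where
  carrier := {u | ∀ c ∈ C, dotProduct u c = 0}
  add_mem' := by
    intro a b ha hb c hc
    simp [add_dotProduct, ha c hc, hb c hc]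
  zero_mem' := by
    intro c hc
    simp
  smul_mem' := by
    intro r a ha c hc
    simp [smul_dotProduct, ha c hc]

/-- A binary code is triorthogonal if it has a triorthogonal generator matrix
(whose number of rows equals the dimension of the code). -/
def IsTriorthogonalCode {n : ℕ} (C : Submodule (ZMod 2) (Fin n → ZMod 2)) : Prop :=
  ∃ (m : ℕ) (G : Matrix (Fin m) (Fin n) (ZMod 2)), Triorthogonal G ∧
    Submodule.span (ZMod 2) (Set.range fun i => G i) = C ∧
    m = Module.finrank (ZMod 2) C

theorem stmt3 {m n : ℕ} (G : Matrix (Fin m) (Fin n) (ZMod 2))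
    (C : Submodule (ZMod 2) (Fin n → ZMod 2))
    (hG : Triorthogonal G)
    (hspan : Submodule.span (ZMod 2) (Set.range fun i => G i) = C) :
    schurSquare C ≤ C ⊔ dualCode C := by
  have h01 : ∀ a : ZMod 2, a = 0 ∨ a = 1 := by decide
  have hsum : ∀ v : Fin n → ZMod 2, ∑ x, v x = (hammingNorm v : ZMod 2) := by
    intro v
    rw [hammingNorm, ← Finset.sum_boole]
    refine Finset.sum_congr rfl fun x _ => ?_
    rcases h01 (v x) with h | h <;> simp [h]
  have heven : ∀ v : Fin n → ZMod 2, Even (hammingNorm v) → ∑ x, v x = 0 := by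
    intro v hv
    rw [hsum v, ZMod.natCast_eq_zero_iff]
    exact hv.two_dvd
  -- rows with distinct indices multiply into the dual code
  have hdual : ∀ i j : Fin m, i ≠ j → G i * G j ∈ dualCode C := by
    intro i j hij c hc
    rw [← hspan] at hc
    induction hc using Submodule.span_induction with
    | mem x hx =>
      obtain ⟨k, rfl⟩ := hx
      have key : Even (hammingNorm (G i * G j * G k)) := by
        by_cases hik : i = k
        · subst hik
          have : G i * G j * G i = G i * G j := by
            funext x
            rcases h01 (G i x) with h | h <;> simp [h, mul_comm, mul_assoc]
          rw [this]; exact hG.1 i j hij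
        · by_cases hjk : j = k
          · subst hjk
            have : G i * G j * G j = G i * G j := by
              funext x
              rcases h01 (G j x) with h | h <;> simp [h, mul_assoc]
            rw [this]; exact hG.1 i j hij
          · exact hG.2 i j k hij hik hjk
      have := heven _ key
      simpa [dotProduct, mul_assoc] using this
    | zero => simp [dotProduct]
    | add y z _ _ hy hz => simp [dotProduct_add, hy, hz]
    | smul r y _ hy => simp [dotProduct_smul, hy]
  have hself : ∀ i : Fin m, G i * G i = G i := by
    intro i; funext x; rcases h01 (G i x) with h | h <;> simp [h]
  -- main argument
  rw [schurSquare, Submodule.span_le]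
  rintro x ⟨c, hc, c', hc', rfl⟩
  rw [← hspan] at hc hc'
  induction hc using Submodule.span_induction with
  | mem a ha =>
    obtain ⟨i, rfl⟩ := ha
    induction hc' using Submodule.span_induction with
    | mem b hb =>
      obtain ⟨j, rfl⟩ := hb
      by_cases hij : i = j
      · subst hij
        rw [hself i]
        exact Submodule.mem_sup_left (hspan ▸ Submodule.subset_span ⟨i, rfl⟩)
      · exact Submodule.mem_sup_right (hdual i j hij)
    | zero => simp
    | add y z _ _ hy hz =>
      have : G i * (y + z) = G i * y + G i * z := mul_add _ _ _
      rw [this]; exact Submodule.add_mem _ hy hz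
    | smul r y _ hy =>
      have : G i * (r • y) = r • (G i * y) := (mul_smul_comm r _ _)
      rw [this]; exact Submodule.smul_mem _ r hy
  | zero => simp
  | add y z _ _ hy hz =>
    have : (y + z) * c' = y * c' + z * c' := add_mul _ _ _
    rw [this]; exact Submodule.add_mem _ hy hz
  | smul r y _ hy =>
    have : (r • y) * c' = r • (y * c') := smul_mul_assoc r _ _
    rw [this]; exact Submodule.smul_mem _ r hy
end

section
/- Let C ⊆ F_2^n be a binary triorthogonal code (i.e., generated by the rows of a triorthogonal matrix). Then Hull(C) := C ∩ C^⊥ is contained in (C^{⋆2})^⊥, and consequently Hull(C) = C ∩ (C^{⋆2})^⊥. -/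
open Matrix

lemma zmod2_mul_self : ∀ x : ZMod 2, x * x = x := by decide

lemma sum_eq_norm {n : ℕ} (v : Fin n → ZMod 2) :
    ∑ t, v t = (hammingNorm v : ZMod 2) := by
  rw [hammingNorm, Finset.card_filter, Nat.cast_sum]
  apply Finset.sum_congr rfl
  intro t _
  rcases (by decide : ∀ x : ZMod 2, x = 0 ∨ x = 1) (v t) with h | h <;> simp [h]

lemma even_cast_zero {k : ℕ} (h : Even k) : (k : ZMod 2) = 0 := by
  obtain ⟨m, rfl⟩ := h
  push_cast
  ring_nf
  simp [(by decide : (2 : ZMod 2) = 0)]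

theorem stmt4 {n : ℕ} (C : Submodule (ZMod 2) (Fin n → ZMod 2))
    (hC : IsTriorthogonalCode C) :
    C ⊓ dualCode C ≤ dualCode (schurSquare C) ∧
    C ⊓ dualCode C = C ⊓ dualCode (schurSquare C) := by
  obtain ⟨m, G, ⟨h2, h3⟩, hspan, -⟩ := hC
  have hrow : ∀ i, G i ∈ C := fun i => hspan ▸ Submodule.subset_span ⟨i, rfl⟩
  have key : C ⊓ dualCode C ≤ dualCode (schurSquare C) := by
    rintro u ⟨huC, huD⟩
    intro x hx
    induction hx using Submodule.span_induction with
    | mem x hx =>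
      obtain ⟨c, hc, c', hc', rfl⟩ := hx
      -- reduce c to generators
      rw [← hspan] at hc hc'
      induction hc using Submodule.span_induction with
      | mem c hcm =>
        obtain ⟨i, rfl⟩ := hcm
        induction hc' using Submodule.span_induction with
        | mem c' hcm' =>
          obtain ⟨j, rfl⟩ := hcm'
          by_cases hij : i = j
          · subst hij
            have : G i * G i = G i := funext fun t => zmod2_mul_self _
            rw [this]
            exact huD (G i) (hrow i)
          · -- induct on u ∈ C = span rows
            have huC' : u ∈ Submodule.span (ZMod 2) (Set.range fun i => G i) :=
              hspan ▸ huC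
            clear huD huC
            induction huC' using Submodule.span_induction with
            | mem u hum =>
              obtain ⟨k, rfl⟩ := hum
              show ∑ t, G k t * (G i t * G j t) = 0
              by_cases hki : k = i
              · subst hki
                have : ∀ t, G k t * (G k t * G j t) = (G k * G j) t := by
                  intro t
                  show _ = G k t * G j t
                  rw [← mul_assoc, zmod2_mul_self]
                simp only [this]
                rw [sum_eq_norm, even_cast_zero (h2 k j hij)]
              · by_cases hkj : k = j
                · subst hkj
                  have : ∀ t, G k t * (G i t * G k t) = (G i * G k) t := by
                    intro t
                    show _ = G i t * G k t
                    rw [mul_comm (G i t) (G k t), ← mul_assoc, zmod2_mul_self, mul_comm]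
                  simp only [this]
                  rw [sum_eq_norm, even_cast_zero (h2 i k hij)]
                · have : ∀ t, G k t * (G i t * G j t) = (G k * G i * G j) t := by
                    intro t
                    show _ = G k t * G i t * G j t
                    rw [mul_assoc]
                  simp only [this]
                  rw [sum_eq_norm, even_cast_zero (h3 k i j hki hkj hij)]
            | zero => simp [dotProduct]
            | add a b _ _ ha hb =>
              rw [add_dotProduct, ha, hb, add_zero]
            | smul r a _ ha =>
              rw [smul_dotProduct, ha, smul_zero]
        | zero => simp [dotProduct]
        | add a b _ _ ha hb =>
          have : G i * (a + b) = G i * a + G i * b := by ring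
          rw [this, dotProduct_add, ha, hb, add_zero]
        | smul r a _ ha =>
          have : G i * (r • a) = r • (G i * a) := by
            funext t; show G i t * (r * a t) = r * (G i t * a t); ring
          rw [this, dotProduct_smul, ha, smul_zero]
      | zero =>
        simp [dotProduct]
      | add a b _ _ ha hb =>
        have : (a + b) * c' = a * c' + b * c' := by ring
        rw [this, dotProduct_add, ha, hb, add_zero]
      | smul r a _ ha =>
        have : (r • a) * c' = r • (a * c') := by
          funext t; show r * a t * c' t = r * (a t * c' t); ring
        rw [this, dotProduct_smul, ha, smul_zero]
    | zero => simp [dotProduct]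
    | add a b _ _ ha hb => rw [dotProduct_add, ha, hb, add_zero]
    | smul r a _ ha => rw [dotProduct_smul, ha, smul_zero]
  refine ⟨key, le_antisymm (fun x hx => ⟨hx.1, key hx⟩) ?_⟩
  rintro x ⟨hxC, hxD⟩
  refine ⟨hxC, fun c hc => ?_⟩
  have hcc : c * c ∈ schurSquare C := Submodule.subset_span ⟨c, hc, c, hc, rfl⟩
  have : c * c = c := funext fun t => zmod2_mul_self _
  rw [← this]
  exact hxD _ hcc
end

section
/- Let G be a triorthogonal matrix over F_2 whose rows are g_1, ..., g_m with the first k_1 rows of odd weight and the rest of even weight, and let M be a nonsingular m × m matrix over F_2 of block form M = [[P, M_2],[0, M_4]] where P is a k_1 × k_1 permutation matrix, M_4 is nonsingular of size k_0 × k_0, and M_2 is arbitrary of size k_1 × k_0. Then MG is a triorthogonal matrix. -/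
open Matrix

section Aux

lemma aux_even_iff_cast (m : ℕ) : Even m ↔ (m : ZMod 2) = 0 := by
  rw [ZMod.natCast_eq_zero_iff]
  exact ⟨fun ⟨k, hk⟩ => ⟨k, by omega⟩, fun ⟨k, hk⟩ => ⟨k, by omega⟩⟩

lemma aux_cast_hammingNorm {n : ℕ} (x : Fin n → ZMod 2) :
    ((hammingNorm x : ℕ) : ZMod 2) = ∑ t, x t := by
  unfold hammingNorm
  rw [Finset.card_eq_sum_ones, Nat.cast_sum, Finset.sum_filter]
  apply Finset.sum_congr rfl
  intro t _
  rcases (by decide : ∀ a : ZMod 2, a = 0 ∨ a = 1) (x t) with h | h <;> simp [h]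

lemma aux_even_iff {n : ℕ} (x : Fin n → ZMod 2) :
    Even (hammingNorm x) ↔ ∑ t, x t = 0 := by
  rw [aux_even_iff_cast, aux_cast_hammingNorm]

lemma aux_odd_sum {n : ℕ} (x : Fin n → ZMod 2) (h : Odd (hammingNorm x)) :
    ∑ t, x t = 1 := by
  rw [← aux_cast_hammingNorm]
  obtain ⟨k, hk⟩ := h
  rw [hk]
  have : ((2 * k : ℕ) : ZMod 2) = 0 := (aux_even_iff_cast _).mp ⟨k, by ring⟩
  push_cast at this ⊢
  rw [this]; ring

lemma aux_expand2 {ι₁ ι₂ τ : Type*} [Fintype ι₁] [Fintype ι₂] [Fintype τ]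
    (f : ι₁ → τ → ZMod 2) (g : ι₂ → τ → ZMod 2) :
    ∑ t, (∑ p, f p t) * (∑ q, g q t) = ∑ p, ∑ q, ∑ t, f p t * g q t := by
  simp only [Finset.sum_mul, Finset.mul_sum]
  rw [Finset.sum_comm]
  trans (∑ q : ι₂, ∑ p : ι₁, ∑ t : τ, f p t * g q t)
  · exact Finset.sum_congr rfl fun q _ => Finset.sum_comm
  · exact Finset.sum_comm

lemma aux_expand3 {ι₁ ι₂ ι₃ τ : Type*} [Fintype ι₁] [Fintype ι₂] [Fintype ι₃] [Fintype τ]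
    (f : ι₁ → τ → ZMod 2) (g : ι₂ → τ → ZMod 2) (h : ι₃ → τ → ZMod 2) :
    ∑ t, (∑ p, f p t) * (∑ q, g q t) * (∑ r, h r t)
      = ∑ p, ∑ q, ∑ r, ∑ t, f p t * g q t * h r t := by
  have key := aux_expand2 (fun (pq : ι₁ × ι₂) t => f pq.1 t * g pq.2 t) h
  calc ∑ t, (∑ p, f p t) * (∑ q, g q t) * (∑ r, h r t)
      = ∑ t, (∑ pq : ι₁ × ι₂, f pq.1 t * g pq.2 t) * (∑ r, h r t) := by
        apply Finset.sum_congr rfl; intro t _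
        congr 1
        rw [Fintype.sum_mul_sum]
        exact (Fintype.sum_prod_type (fun pq : ι₁ × ι₂ => f pq.1 t * g pq.2 t)).symm
    _ = ∑ pq : ι₁ × ι₂, ∑ r, ∑ t, f pq.1 t * g pq.2 t * h r t := key
    _ = ∑ p, ∑ q, ∑ r, ∑ t, f p t * g q t * h r t :=
        Fintype.sum_prod_type (fun pq : ι₁ × ι₂ => ∑ r, ∑ t, f pq.1 t * g pq.2 t * h r t)

end Aux

/-- A permutation matrix. -/
def IsPermMatrix {k : ℕ} (P : Matrix (Fin k) (Fin k) (ZMod 2)) : Prop :=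
  ∃ σ : Equiv.Perm (Fin k), ∀ i j, P i j = if σ i = j then 1 else 0

theorem stmt9 {k1 k0 n : ℕ} (G : Matrix (Fin (k1 + k0)) (Fin n) (ZMod 2))
    (hG : Triorthogonal G)
    (hodd : ∀ i : Fin (k1 + k0), (i : ℕ) < k1 → Odd (hammingNorm (G i)))
    (heven : ∀ i : Fin (k1 + k0), k1 ≤ (i : ℕ) → Even (hammingNorm (G i)))
    (hhull : Submodule.span (ZMod 2) {x | ∃ i : Fin (k1 + k0), k1 ≤ (i : ℕ) ∧ x = G i} =
      (Submodule.span (ZMod 2) (Set.range fun i => G i)) ⊓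
        dualCode (Submodule.span (ZMod 2) (Set.range fun i => G i)))
    (P : Matrix (Fin k1) (Fin k1) (ZMod 2)) (hP : IsPermMatrix P)
    (M2 : Matrix (Fin k1) (Fin k0) (ZMod 2))
    (M4 : Matrix (Fin k0) (Fin k0) (ZMod 2)) (hM4 : IsUnit M4.det)
    (M : Matrix (Fin (k1 + k0)) (Fin (k1 + k0)) (ZMod 2))
    (hM : M = Matrix.reindex finSumFinEquiv finSumFinEquiv (Matrix.fromBlocks P M2 0 M4)) :
    Triorthogonal (M * G) := by
  obtain ⟨σ, hPσ⟩ := hP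
  have hsq : ∀ a : ZMod 2, a * a = a := by decide
  set e : Fin k1 ⊕ Fin k0 ≃ Fin (k1 + k0) := finSumFinEquiv with he
  -- S p
  set S : Fin (k1 + k0) → ZMod 2 := fun p => if (p : ℕ) < k1 then 1 else 0 with hS
  have hdiag : ∀ p, ∑ t, G p t = S p := by
    intro p
    by_cases h1 : (p : ℕ) < k1
    · rw [hS]; simp only [if_pos h1]; exact aux_odd_sum _ (hodd p h1)
    · rw [hS]; simp only [if_neg h1]
      exact (aux_even_iff (G p)).mp (heven p (le_of_not_gt h1))
  have hpair : ∀ p q : Fin (k1 + k0), (∑ t, G p t * G q t) = if p = q then S p else 0 := by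
    intro p q
    by_cases hpq : p = q
    · subst hpq; rw [if_pos rfl, ← hdiag p]
      exact Finset.sum_congr rfl fun t _ => hsq _
    · rw [if_neg hpq]
      have := (aux_even_iff (G p * G q)).mp (hG.1 p q hpq)
      simpa [Pi.mul_apply] using this
  have htrip : ∀ p q r : Fin (k1 + k0), (∑ t, G p t * G q t * G r t) =
      if p = q ∧ q = r then S p else 0 := by
    intro p q r
    by_cases h1 : p = q
    · subst h1
      by_cases h2 : p = r
      · subst h2; rw [if_pos ⟨rfl, rfl⟩, ← hdiag p]
        exact Finset.sum_congr rfl fun t _ => by rw [hsq, hsq]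
      · rw [if_neg (fun h => h2 h.2)]
        have : ∀ t, G p t * G p t * G r t = G p t * G r t := fun t => by rw [hsq]
        rw [Finset.sum_congr rfl fun t _ => this t, hpair p r, if_neg h2]
    · rw [if_neg (fun h => h1 h.1)]
      by_cases h2 : q = r
      · subst h2
        have : ∀ t, G p t * G q t * G q t = G p t * G q t := fun t => by
          rw [mul_assoc, hsq]
        rw [Finset.sum_congr rfl fun t _ => this t, hpair p q, if_neg h1]
      · by_cases h3 : p = r
        · subst h3
          have : ∀ t, G p t * G q t * G p t = G p t * G q t := fun t => by
            rw [mul_comm (G p t) (G q t), mul_assoc, hsq, mul_comm]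
          rw [Finset.sum_congr rfl fun t _ => this t, hpair p q, if_neg h1]
        · have := (aux_even_iff (G p * G q * G r)).mp (hG.2 p q r h1 h3 h2)
          simpa [Pi.mul_apply] using this
  -- structure of M
  have hMapply : ∀ (x : Fin (k1 + k0)) (b : Fin k1),
      M x (e (Sum.inl b)) = Matrix.fromBlocks P M2 0 M4 (e.symm x) (Sum.inl b) := by
    intro x b
    rw [hM]
    simp [Matrix.reindex_apply, Matrix.submatrix_apply, he]
  have hSinl : ∀ b : Fin k1, S (e (Sum.inl b)) = 1 := by
    intro b
    rw [hS]
    simp [he, finSumFinEquiv]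
  have hSinr : ∀ b : Fin k0, S (e (Sum.inr b)) = 0 := by
    intro b
    rw [hS]
    simp [he, finSumFinEquiv]
  -- the key vanishing sums
  have key2 : ∀ i j : Fin (k1 + k0), i ≠ j → ∑ p, M i p * M j p * S p = 0 := by
    intro i j hij
    rw [← Equiv.sum_comp e (fun p => M i p * M j p * S p), Fintype.sum_sum_type]
    have hr : ∀ b : Fin k0, M i (e (Sum.inr b)) * M j (e (Sum.inr b)) * S (e (Sum.inr b)) = 0 := by
      intro b; rw [hSinr, mul_zero]
    rw [Finset.sum_congr rfl (fun b _ => hr b), Finset.sum_const_zero, add_zero]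
    rcases hci : e.symm i with c | c
    · rcases hcj : e.symm j with d | d
      · have hcd : c ≠ d := by
          intro h; apply hij
          have : e.symm i = e.symm j := by rw [hci, hcj, h]
          exact e.symm.injective this
        apply Finset.sum_eq_zero
        intro b _
        rw [hMapply, hMapply, hci, hcj, hSinl, mul_one]
        simp only [Matrix.fromBlocks_apply₁₁]
        rw [hPσ, hPσ]
        by_cases hb : σ c = b
        · rw [if_pos hb, one_mul, if_neg (fun h => hcd (σ.injective (hb.trans h.symm)))]
        · rw [if_neg hb, zero_mul]
      · apply Finset.sum_eq_zero
        intro b _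
        rw [hMapply j, hcj]
        simp only [Matrix.fromBlocks_apply₂₁, Matrix.zero_apply]
        rw [mul_zero, zero_mul]
    · apply Finset.sum_eq_zero
      intro b _
      rw [hMapply i, hci]
      simp only [Matrix.fromBlocks_apply₂₁, Matrix.zero_apply]
      rw [zero_mul, zero_mul]
  have key3 : ∀ i j k : Fin (k1 + k0), i ≠ j →
      ∑ p, M i p * M j p * M k p * S p = 0 := by
    intro i j k hij
    rw [← Equiv.sum_comp e (fun p => M i p * M j p * M k p * S p), Fintype.sum_sum_type]
    have hr : ∀ b : Fin k0,
        M i (e (Sum.inr b)) * M j (e (Sum.inr b)) * M k (e (Sum.inr b)) * S (e (Sum.inr b)) = 0 := by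
      intro b; rw [hSinr, mul_zero]
    rw [Finset.sum_congr rfl (fun b _ => hr b), Finset.sum_const_zero, add_zero]
    rcases hci : e.symm i with c | c
    · rcases hcj : e.symm j with d | d
      · have hcd : c ≠ d := by
          intro h; apply hij
          have : e.symm i = e.symm j := by rw [hci, hcj, h]
          exact e.symm.injective this
        apply Finset.sum_eq_zero
        intro b _
        rw [hMapply i, hMapply j, hci, hcj, hSinl, mul_one]
        simp only [Matrix.fromBlocks_apply₁₁]
        rw [hPσ, hPσ]
        by_cases hb : σ c = b
        · rw [if_pos hb, one_mul, if_neg (fun h => hcd (σ.injective (hb.trans h.symm))), zero_mul]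
        · rw [if_neg hb, zero_mul, zero_mul]
      · apply Finset.sum_eq_zero
        intro b _
        rw [hMapply j, hcj]
        simp only [Matrix.fromBlocks_apply₂₁, Matrix.zero_apply]
        rw [mul_zero, zero_mul, zero_mul]
    · apply Finset.sum_eq_zero
      intro b _
      rw [hMapply i, hci]
      simp only [Matrix.fromBlocks_apply₂₁, Matrix.zero_apply]
      rw [zero_mul, zero_mul, zero_mul]
  constructor
  · intro i j hij
    rw [aux_even_iff]
    calc ∑ t, ((M * G) i * (M * G) j) t
        = ∑ t, (∑ p, M i p * G p t) * (∑ q, M j q * G q t) := by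
          apply Finset.sum_congr rfl; intro t _
          rw [Pi.mul_apply, Matrix.mul_apply, Matrix.mul_apply]
      _ = ∑ p, ∑ q, ∑ t, (M i p * G p t) * (M j q * G q t) :=
          aux_expand2 (fun p t => M i p * G p t) (fun q t => M j q * G q t)
      _ = ∑ p, ∑ q, M i p * M j q * (if p = q then S p else 0) := by
          apply Finset.sum_congr rfl; intro p _
          apply Finset.sum_congr rfl; intro q _
          rw [← hpair p q, Finset.mul_sum]
          apply Finset.sum_congr rfl; intro t _; ring
      _ = ∑ p, M i p * M j p * S p := by
          apply Finset.sum_congr rfl; intro p _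
          simp [Finset.sum_ite_eq, mul_ite]
      _ = 0 := key2 i j hij
  · intro i j k hij hik hjk
    rw [aux_even_iff]
    calc ∑ t, ((M * G) i * (M * G) j * (M * G) k) t
        = ∑ t, (∑ p, M i p * G p t) * (∑ q, M j q * G q t) * (∑ r, M k r * G r t) := by
          apply Finset.sum_congr rfl; intro t _
          rw [Pi.mul_apply, Pi.mul_apply, Matrix.mul_apply, Matrix.mul_apply, Matrix.mul_apply]
      _ = ∑ p, ∑ q, ∑ r, ∑ t, (M i p * G p t) * (M j q * G q t) * (M k r * G r t) :=
          aux_expand3 _ _ _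
      _ = ∑ p, ∑ q, ∑ r, M i p * M j q * M k r * (if p = q ∧ q = r then S p else 0) := by
          apply Finset.sum_congr rfl; intro p _
          apply Finset.sum_congr rfl; intro q _
          apply Finset.sum_congr rfl; intro r _
          rw [← htrip p q r, Finset.mul_sum]
          apply Finset.sum_congr rfl; intro t _; ring
      _ = ∑ p, M i p * M j p * M k p * S p := by
          apply Finset.sum_congr rfl; intro p _
          simp only [mul_ite, mul_one, mul_zero, ite_and]
          rw [Finset.sum_comm]
          simp [Finset.sum_ite_eq]
      _ = 0 := key3 i j k hij
end

section
/- Let C ⊆ F_2^n be a binary triorthogonal code satisfying (C^{⋆2})^⊥ ⊆ C. Then (C^{⋆2})^⊥ = Hull(C) = C ∩ C^⊥. -/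
open Matrix

open Finset in
lemma zmod2_sum_eq {n : ℕ} (v : Fin n → ZMod 2) : ∑ i, v i = (hammingNorm v : ZMod 2) := by
  rw [hammingNorm, ← Finset.sum_filter_ne_zero]
  rw [Finset.sum_congr rfl (fun i hi => ?_), Finset.sum_const, nsmul_eq_mul, mul_one]
  have : ∀ a : ZMod 2, a ≠ 0 → a = 1 := by decide
  exact this _ (Finset.mem_filter.1 hi).2

lemma even_sum_zero {n : ℕ} {v : Fin n → ZMod 2} (h : Even (hammingNorm v)) :
    ∑ i, v i = 0 := by
  rw [zmod2_sum_eq]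
  obtain ⟨k, hk⟩ := h
  have h2 : (2 : ZMod 2) = 0 := rfl
  push_cast [hk]
  ring_nf
  simp [h2]

lemma zmod2_mul_self_s12 {n : ℕ} (v : Fin n → ZMod 2) : v * v = v := by
  funext i
  have : ∀ a : ZMod 2, a * a = a := by decide
  exact this (v i)

def dotL {n : ℕ} (x : Fin n → ZMod 2) : (Fin n → ZMod 2) →ₗ[ZMod 2] ZMod 2 where
  toFun c := dotProduct x c
  map_add' a b := dotProduct_add x a b
  map_smul' r a := dotProduct_smul r x a |>.symm ▸ rfl

lemma dot_eq_sum {n : ℕ} (x v : Fin n → ZMod 2) :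
    dotProduct x v = ∑ i, (x * v) i := by
  rfl

lemma mem_dual_of_gen {n : ℕ} {S : Set (Fin n → ZMod 2)} {y : Fin n → ZMod 2}
    (h : ∀ s ∈ S, dotProduct y s = 0) :
    y ∈ dualCode (Submodule.span (ZMod 2) S) := by
  intro c hc
  have : Submodule.span (ZMod 2) S ≤ LinearMap.ker (dotL y) := by
    rw [Submodule.span_le]
    intro s hs
    exact h s hs
  exact this hc

theorem stmt12 {n : ℕ} (C : Submodule (ZMod 2) (Fin n → ZMod 2))
    (hC : IsTriorthogonalCode C)
    (hsub : dualCode (schurSquare C) ≤ C) :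
    dualCode (schurSquare C) = C ⊓ dualCode C := by
  obtain ⟨m, G, ⟨h2, h3⟩, hspan, -⟩ := hC
  -- C ≤ schurSquare C
  have hCsub : C ≤ schurSquare C := by
    intro c hc
    exact Submodule.subset_span ⟨c, hc, c, hc, (zmod2_mul_self_s12 c).symm⟩
  apply le_antisymm
  · refine le_inf hsub ?_
    intro y hy c hc
    exact hy c (hCsub hc)
  · rintro x ⟨hxC, hxD⟩
    -- key : rows' pairwise products are in dualCode C
    have key : ∀ i j : Fin m, i ≠ j → (G i * G j) ∈ dualCode C := by
      intro i j hij
      rw [← hspan]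
      apply mem_dual_of_gen
      rintro s ⟨k, rfl⟩
      rw [dot_eq_sum]
      by_cases hik : i = k
      · subst hik
        have : G i * G j * G i = G i * G j := by
          rw [mul_comm (G i) (G j), mul_assoc, zmod2_mul_self_s12]
        rw [this]
        exact even_sum_zero (h2 i j hij)
      · by_cases hjk : j = k
        · subst hjk
          have : G i * G j * G j = G i * G j := by
            rw [mul_assoc, zmod2_mul_self_s12]
          rw [this]
          exact even_sum_zero (h2 i j hij)
        · exact even_sum_zero (h3 i j k hij hik hjk)
    -- x is orthogonal to any product of two rows
    have keyx : ∀ i j : Fin m, dotProduct x (G i * G j) = 0 := by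
      intro i j
      by_cases hij : i = j
      · subst hij
        rw [zmod2_mul_self_s12]
        exact hxD (G i) (hspan ▸ Submodule.subset_span ⟨i, rfl⟩)
      · rw [dotProduct_comm]
        exact key i j hij x hxC
    -- x orthogonal to c * c' for all c, c' ∈ C
    have keyc : ∀ c ∈ C, ∀ c' ∈ C, dotProduct x (c * c') = 0 := by
      intro c hc
      rw [← hspan] at hc
      induction hc using Submodule.span_induction with
      | mem s hs =>
        obtain ⟨i, rfl⟩ := hs
        intro c' hc'
        rw [← hspan] at hc'
        induction hc' using Submodule.span_induction with
        | mem s' hs' =>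
          obtain ⟨j, rfl⟩ := hs'
          exact keyx i j
        | zero => simp
        | add a b ha hb iha ihb =>
          rw [mul_add, dotProduct_add, iha, ihb, add_zero]
        | smul r a ha iha =>
          rw [mul_smul_comm, dotProduct_smul, iha, smul_zero]
      | zero => intro c' hc'; simp
      | add a b ha hb iha ihb =>
        intro c' hc'
        rw [add_mul, dotProduct_add, iha c' hc', ihb c' hc', add_zero]
      | smul r a ha iha =>
        intro c' hc'
        rw [smul_mul_assoc, dotProduct_smul, iha c' hc', smul_zero]
    apply mem_dual_of_gen
    rintro s ⟨c, hc, c', hc', rfl⟩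
    exact keyc c hc c' hc'
end

section
/- Let C ⊆ F_2^n be a binary code with a generator matrix G whose rows r_1, ..., r_m satisfy: r_i ⋆ r_j has even weight for all i ≠ j and r_i ⋆ r_j ⋆ r_k has even weight for pairwise distinct i, j, k. Then for every c ∈ C of even Hamming weight and every pair of distinct rows r_i, r_j, the vector r_i ⋆ r_j ⋆ c has even Hamming weight; equivalently (r_i ⋆ r_j) · c = 0. -/
open Matrix

lemma cast_hammingNorm {n : ℕ} (x : Fin n → ZMod 2) :
    (hammingNorm x : ZMod 2) = ∑ k, x k := by
  have h : ∀ a : ZMod 2, a = if a ≠ 0 then (1 : ZMod 2) else 0 := by decide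
  rw [hammingNorm]
  rw [Finset.card_filter]
  push_cast
  exact Finset.sum_congr rfl fun k _ => by rw [h (x k)]; split <;> simp

lemma even_iff_sum {n : ℕ} (x : Fin n → ZMod 2) :
    Even (hammingNorm x) ↔ ∑ k, x k = 0 := by
  rw [← cast_hammingNorm, ZMod.natCast_eq_zero_iff, even_iff_two_dvd]

lemma mul_self_zmod2 {n : ℕ} (x : Fin n → ZMod 2) : x * x = x := by
  funext k
  have : ∀ a : ZMod 2, a * a = a := by decide
  exact this (x k)

theorem stmt15 {m n : ℕ} (G : Matrix (Fin m) (Fin n) (ZMod 2))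
    (C : Submodule (ZMod 2) (Fin n → ZMod 2))
    (hG : Triorthogonal G)
    (hspan : Submodule.span (ZMod 2) (Set.range fun i => G i) = C) :
    ∀ c ∈ C, Even (hammingNorm c) → ∀ i j : Fin m, i ≠ j →
      Even (hammingNorm (G i * G j * c)) ∧ dotProduct (G i * G j) c = 0 := by
  intro c hc hev i j hij
  clear hev
  have key : ∑ k, (G i * G j * c) k = 0 := by
    rw [← hspan] at hc
    induction hc using Submodule.span_induction with
    | mem x hx =>
      obtain ⟨h, rfl⟩ := hx
      by_cases hih : i = h
      · subst hih
        rw [show G i * G j * G i = G i * G j by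
          rw [mul_comm, ← mul_assoc, mul_self_zmod2]]
        exact (even_iff_sum _).mp (hG.1 i j hij)
      · by_cases hjh : j = h
        · subst hjh
          rw [mul_assoc, mul_self_zmod2]
          exact (even_iff_sum _).mp (hG.1 i j hij)
        · exact (even_iff_sum _).mp (hG.2 i j h hij hih hjh)
    | zero => simp
    | add x y _ _ hx hy =>
      rw [mul_add]
      simp only [Pi.add_apply, Finset.sum_add_distrib, hx, hy, add_zero]
    | smul r x _ hx =>
      rw [mul_smul_comm]
      simp only [Pi.smul_apply, ← Finset.smul_sum, hx, smul_zero]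
  constructor
  · exact (even_iff_sum _).mpr key
  · rw [dotProduct]
    simpa [Pi.mul_apply] using key
end
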